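/- Let p₁ : G₁ → Q and p₂ : G₂ → Q be surjective group homomorphisms with G₁, G₂ finitely generated and Q finitely presented. Then the fibre product P = {(g₁,g₂) ∈ G₁ × G₂ : p₁(g₁) = p₂(g₂)} is finitely generated. -/
import Mathlib

/-- A group is finitely presented if it is isomorphic to a `PresentedGroup` on finitely
many generators with finitely many relations. -/
def FinitelyPresented (Q : Type*) [Group Q] : Prop :=
  ∃ (n : ℕ) (rels : Set (FreeGroup (Fin n))),
    rels.Finite ∧ Nonempty (PresentedGroup rels ≃* Q)

/-- The fibre product of two homomorphisms p₁ : G₁ → Q and p₂ : G₂ → Q, as a subgroup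
of G₁ × G₂. -/
def fiberProd {G₁ G₂ Q : Type*} [Group G₁] [Group G₂] [Group Q]
    (p₁ : G₁ →* Q) (p₂ : G₂ →* Q) : Subgroup (G₁ × G₂) where
  carrier := { x | p₁ x.1 = p₂ x.2 }
  one_mem' := by simp
  mul_mem' := by
    intro a b ha hb
    simp only [Set.mem_setOf_eq, Prod.fst_mul, Prod.snd_mul, map_mul] at *
    rw [ha, hb]
  inv_mem' := by
    intro a ha
    simp only [Set.mem_setOf_eq, Prod.fst_inv, Prod.snd_inv, map_inv] at *
    rw [ha]

/-- the fibre product of surjections p₁ : G₁ → Q, p₂ : G₂ → Q with G₁, G₂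
finitely generated and Q finitely presented is finitely generated. -/
theorem fiber_product_fg
    (G₁ G₂ Q : Type*) [Group G₁] [Group G₂] [Group Q]
    (h₁ : Group.FG G₁) (h₂ : Group.FG G₂) (hQ : FinitelyPresented Q)
    (p₁ : G₁ →* Q) (p₂ : G₂ →* Q)
    (hp₁ : Function.Surjective p₁) (hp₂ : Function.Surjective p₂) :
    Group.FG ↥(fiberProd p₁ p₂) := by
  obtain ⟨n, rels, hrelsfin, ⟨e⟩⟩ := hQ
  obtain ⟨S₁, hS₁c, hS₁f⟩ := Group.fg_iff.mp h₁
  obtain ⟨S₂, hS₂c, hS₂f⟩ := Group.fg_iff.mp h₂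
  haveI := hS₁f.to_subtype
  haveI := hS₂f.to_subtype
  -- the projection from the free group to Q
  set q : FreeGroup (Fin n) →* Q := e.toMonoidHom.comp (PresentedGroup.mk rels) with hq
  have hmk1 : ∀ r ∈ rels, PresentedGroup.mk rels r = 1 := fun r hr =>
    (QuotientGroup.eq_one_iff r).mpr (Subgroup.subset_normalClosure hr)
  have hq1 : ∀ r ∈ rels, q r = 1 := by intro r hr; simp [hq, hmk1 r hr]
  have hqof : ∀ j : Fin n, q (FreeGroup.of j) = e (PresentedGroup.of j) := fun _ => rfl
  have hqsurj : Function.Surjective q := e.surjective.comp (PresentedGroup.mk_surjective _)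
  -- lifts of the generators of Q
  choose a1 ha1 using fun j : Fin n => hp₁ (q (FreeGroup.of j))
  choose a2 ha2 using fun j : Fin n => hp₂ (q (FreeGroup.of j))
  set F₁ : FreeGroup (Fin n) →* G₁ := FreeGroup.lift a1 with hF₁
  set F₂ : FreeGroup (Fin n) →* G₂ := FreeGroup.lift a2 with hF₂
  set D : FreeGroup (Fin n) →* G₁ × G₂ := FreeGroup.lift (fun j => (a1 j, a2 j)) with hD
  have hpF₁ : ∀ w, p₁ (F₁ w) = q w := by
    intro w
    rw [← MonoidHom.comp_apply]
    congr 1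
    ext j
    simp only [MonoidHom.comp_apply, hF₁, FreeGroup.lift_apply_of]
    exact ha1 j
  have hpF₂ : ∀ w, p₂ (F₂ w) = q w := by
    intro w
    rw [← MonoidHom.comp_apply]
    congr 1
    ext j
    simp only [MonoidHom.comp_apply, hF₂, FreeGroup.lift_apply_of]
    exact ha2 j
  have hD1 : ∀ w, (D w).1 = F₁ w := by
    intro w
    have : (MonoidHom.fst G₁ G₂).comp D = F₁ := by
      ext j
      simp [hD, hF₁]
    rw [← this]; rfl
  have hD2 : ∀ w, (D w).2 = F₂ w := by
    intro w
    have : (MonoidHom.snd G₁ G₂).comp D = F₂ := by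
      ext j
      simp [hD, hF₂]
    rw [← this]; rfl
  -- correction elements in the kernels
  choose w1 hw1 using fun s : ↥S₁ => hqsurj (p₁ s)
  choose w2 hw2 using fun s : ↥S₂ => hqsurj (p₂ s)
  set b1 : ↥S₁ → G₁ := fun s => (s : G₁) * (F₁ (w1 s))⁻¹ with hb1
  set b2 : ↥S₂ → G₂ := fun s => (s : G₂) * (F₂ (w2 s))⁻¹ with hb2
  have hb1ker : ∀ s, p₁ (b1 s) = 1 := by
    intro s
    simp [hb1, hpF₁, hw1 s]
  have hb2ker : ∀ s, p₂ (b2 s) = 1 := by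
    intro s
    simp [hb2, hpF₂, hw2 s]
  -- the finite generating set
  set T : Set (G₁ × G₂) :=
    (Set.range fun j : Fin n => (a1 j, a2 j)) ∪ (Set.range fun s : ↥S₁ => (b1 s, (1 : G₂)))
      ∪ (Set.range fun s : ↥S₂ => ((1 : G₁), b2 s)) ∪ ((fun r => (F₁ r, (1 : G₂))) '' rels)
    with hT
  have hTfin : T.Finite :=
    (((Set.finite_range _).union (Set.finite_range _)).union (Set.finite_range _)).union
      (hrelsfin.image _)
  set H : Subgroup (G₁ × G₂) := Subgroup.closure T with hH
  -- membership of the basic elements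
  have hmemD : ∀ w, D w ∈ H := by
    intro w
    have hr : D.range ≤ H := by
      rw [hD, FreeGroup.range_lift_eq_closure]
      apply Subgroup.closure_le H |>.mpr
      intro x hx
      exact Subgroup.subset_closure (Or.inl (Or.inl (Or.inl hx)))
    exact hr ⟨w, rfl⟩
  have hmemb1 : ∀ s, ((b1 s, (1 : G₂)) : G₁ × G₂) ∈ H :=
    fun s => Subgroup.subset_closure (Or.inl (Or.inl (Or.inr ⟨s, rfl⟩)))
  have hmemb2 : ∀ s, (((1 : G₁), b2 s) : G₁ × G₂) ∈ H :=
    fun s => Subgroup.subset_closure (Or.inl (Or.inr ⟨s, rfl⟩))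
  have hmemrel : ∀ r ∈ rels, ((F₁ r, (1 : G₂)) : G₁ × G₂) ∈ H :=
    fun r hr => Subgroup.subset_closure (Or.inr ⟨r, hr, rfl⟩)
  -- H is contained in the fibre product
  have hHP : H ≤ fiberProd p₁ p₂ := by
    rw [hH]
    apply Subgroup.closure_le (fiberProd p₁ p₂) |>.mpr
    rintro x (((⟨j, rfl⟩ | ⟨s, rfl⟩) | ⟨s, rfl⟩) | ⟨r, hr, rfl⟩)
    · show p₁ (a1 j) = p₂ (a2 j)
      rw [ha1, ha2]
    · show p₁ (b1 s) = p₂ 1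
      rw [hb1ker, map_one]
    · show p₁ 1 = p₂ (b2 s)
      rw [hb2ker, map_one]
    · show p₁ (F₁ r) = p₂ 1
      rw [hpF₁, hq1 r hr, map_one]
  -- projections of H are everything
  have hmapfst : Subgroup.map (MonoidHom.fst G₁ G₂) H = ⊤ := by
    rw [eq_top_iff, ← hS₁c]
    apply Subgroup.closure_le _ |>.mpr
    intro s hs
    have hmul : ((b1 ⟨s, hs⟩, (1 : G₂)) : G₁ × G₂) * D (w1 ⟨s, hs⟩) ∈ H :=
      mul_mem (hmemb1 _) (hmemD _)
    refine ⟨_, hmul, ?_⟩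
    show (b1 ⟨s, hs⟩ * (D (w1 ⟨s, hs⟩)).1 : G₁) = s
    rw [hD1, hb1]
    simp
  have hmapsnd : Subgroup.map (MonoidHom.snd G₁ G₂) H = ⊤ := by
    rw [eq_top_iff, ← hS₂c]
    apply Subgroup.closure_le _ |>.mpr
    intro s hs
    have hmul : (((1 : G₁), b2 ⟨s, hs⟩) : G₁ × G₂) * D (w2 ⟨s, hs⟩) ∈ H :=
      mul_mem (hmemb2 _) (hmemD _)
    refine ⟨_, hmul, ?_⟩
    show (b2 ⟨s, hs⟩ * (D (w2 ⟨s, hs⟩)).2 : G₂) = s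
    rw [hD2, hb2]
    simp
  -- the subgroup K of elements x with (1, x) ∈ H
  set K : Subgroup G₂ := Subgroup.comap (MonoidHom.inr G₁ G₂) H with hK
  have hKmem : ∀ x : G₂, x ∈ K ↔ ((1 : G₁), x) ∈ H := fun x => Iff.rfl
  haveI hKnormal : K.Normal := by
    constructor
    intro x hx g
    have hg : g ∈ Subgroup.map (MonoidHom.snd G₁ G₂) H := by rw [hmapsnd]; trivial
    obtain ⟨⟨y1, y2⟩, hy, hy2⟩ := Subgroup.mem_map.mp hg
    have hy2' : y2 = g := hy2
    subst hy2'
    have hmul : ((y1, y2) : G₁ × G₂) * ((1 : G₁), x) * ((y1, y2) : G₁ × G₂)⁻¹ ∈ H :=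
      mul_mem (mul_mem hy ((hKmem x).mp hx)) (inv_mem hy)
    have heq : ((y1, y2) : G₁ × G₂) * ((1 : G₁), x) * ((y1, y2) : G₁ × G₂)⁻¹
        = ((1 : G₁), y2 * x * y2⁻¹) := by
      simp [Prod.ext_iff, mul_assoc]
    rw [hKmem]
    rw [← heq]
    exact hmul
  have hFrK : ∀ r ∈ rels, F₂ r ∈ K := by
    intro r hr
    have hmul : ((F₁ r, (1 : G₂)) : G₁ × G₂)⁻¹ * D r ∈ H :=
      mul_mem (inv_mem (hmemrel r hr)) (hmemD r)
    have heq : ((F₁ r, (1 : G₂)) : G₁ × G₂)⁻¹ * D r = ((1 : G₁), F₂ r) := by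
      have hDr : D r = (F₁ r, F₂ r) := Prod.ext (hD1 r) (hD2 r)
      rw [hDr]
      simp [Prod.ext_iff]
    rw [hKmem, ← heq]
    exact hmul
  have hb2K : ∀ s, b2 s ∈ K := fun s => (hKmem _).mpr (hmemb2 s)
  -- the normal closure M and the section ψ : Q → G₂ ⧸ M
  set M : Subgroup G₂ := Subgroup.normalClosure ((F₂ '' rels) ∪ Set.range b2) with hM
  have hgenM : ((F₂ '' rels) ∪ Set.range b2) ⊆ (K : Set G₂) := by
    rintro x (⟨r, hr, rfl⟩ | ⟨s, rfl⟩)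
    · exact hFrK r hr
    · exact hb2K s
  have hMK : M ≤ K := Subgroup.normalClosure_le_normal hgenM
  have hclos2 : Subgroup.closure (Set.range a2 ∪ Set.range b2) = ⊤ := by
    rw [eq_top_iff, ← hS₂c]
    apply Subgroup.closure_le _ |>.mpr
    intro s hs
    have h1 : b2 ⟨s, hs⟩ ∈ Subgroup.closure (Set.range a2 ∪ Set.range b2) :=
      Subgroup.subset_closure (Or.inr ⟨⟨s, hs⟩, rfl⟩)
    have h2 : F₂ (w2 ⟨s, hs⟩) ∈ Subgroup.closure (Set.range a2 ∪ Set.range b2) := by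
      have hr : F₂.range ≤ Subgroup.closure (Set.range a2 ∪ Set.range b2) := by
        rw [hF₂, FreeGroup.range_lift_eq_closure]
        exact Subgroup.closure_mono Set.subset_union_left
      exact hr ⟨_, rfl⟩
    have := mul_mem h1 h2
    simpa [hb2] using this
  have hlifteq : FreeGroup.lift (fun j => ((a2 j : G₂) : G₂ ⧸ M))
      = (QuotientGroup.mk' M).comp F₂ := by
    ext j
    simp [hF₂]
  have hrel1 : ∀ r ∈ rels, FreeGroup.lift (fun j => ((a2 j : G₂) : G₂ ⧸ M)) r = 1 := by
    intro r hr
    rw [hlifteq, MonoidHom.comp_apply, QuotientGroup.mk'_apply]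
    exact (QuotientGroup.eq_one_iff _).mpr
      (Subgroup.subset_normalClosure (Or.inl ⟨r, hr, rfl⟩))
  set ψ : Q →* G₂ ⧸ M := (PresentedGroup.toGroup hrel1).comp e.symm.toMonoidHom with hψ
  have hψp : ψ.comp p₂ = QuotientGroup.mk' M := by
    apply MonoidHom.eq_of_eqOn_dense hclos2
    rintro x (⟨j, rfl⟩ | ⟨s, rfl⟩)
    · show ψ (p₂ (a2 j)) = ((a2 j : G₂) : G₂ ⧸ M)
      rw [ha2, hqof, hψ]
      simp only [MonoidHom.comp_apply, MulEquiv.coe_toMonoidHom]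
      rw [MulEquiv.symm_apply_apply]
      exact PresentedGroup.toGroup.of hrel1
    · show ψ (p₂ (b2 s)) = ((b2 s : G₂) : G₂ ⧸ M)
      rw [hb2ker s, map_one]
      have hb2M : ((b2 s : G₂) : G₂ ⧸ M) = 1 := (QuotientGroup.eq_one_iff (b2 s)).mpr
        (Subgroup.subset_normalClosure (Or.inr ⟨s, rfl⟩))
      exact hb2M.symm
  have hker2M : p₂.ker ≤ M := by
    intro x hx
    have h1 : (QuotientGroup.mk' M) x = 1 := by
      rw [← hψp, MonoidHom.comp_apply, MonoidHom.mem_ker.mp hx, map_one]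
    rw [QuotientGroup.mk'_apply] at h1
    exact (QuotientGroup.eq_one_iff x).mp h1
  have hkerK : p₂.ker ≤ K := le_trans hker2M hMK
  -- the fibre product is contained in H
  have hPH : fiberProd p₁ p₂ ≤ H := by
    rintro ⟨g₁, g₂⟩ hg
    have hg' : p₁ g₁ = p₂ g₂ := hg
    have hg1 : g₁ ∈ Subgroup.map (MonoidHom.fst G₁ G₂) H := by rw [hmapfst]; trivial
    obtain ⟨⟨y1, y2⟩, hy, hy1⟩ := Subgroup.mem_map.mp hg1
    have hy1' : y1 = g₁ := hy1
    have hy' : p₁ y1 = p₂ y2 := hHP hy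
    have hker : g₂ * y2⁻¹ ∈ p₂.ker := by
      rw [MonoidHom.mem_ker, map_mul, map_inv, ← hy', hy1', hg']
      simp
    have h1 : (((1 : G₁), g₂ * y2⁻¹) : G₁ × G₂) ∈ H := (hKmem _).mp (hkerK hker)
    have hmul := mul_mem h1 hy
    have heq : (((1 : G₁), g₂ * y2⁻¹) : G₁ × G₂) * (y1, y2) = (g₁, g₂) := by
      simp [Prod.ext_iff, mul_assoc, hy1']
    rw [← heq]
    exact hmul
  have hEq : fiberProd p₁ p₂ = H := le_antisymm hPH hHP
  rw [Group.fg_iff_subgroup_fg, Subgroup.fg_iff]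
  exact ⟨T, by rw [hEq, hH], hTfin⟩
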